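/- arXiv:0711.0676 — 2 statements merged into one kernel-verified Lean document; each statement's English description precedes it below -/
import Mathlib

section
/- Let p > 2 with p not an even integer, and let j be an odd integer with j > p/2. Then the trigonometric polynomials G_0 = (1 + e_j)(1 + e_{j+1}) and g_0 = (1 + e_j)(1 − e_{j+1}) satisfy ‖G_0‖_{L^p(𝕋)} < ‖g_0‖_{L^p(𝕋)}. (This is the failure of the Hardy–Littlewood majorant property: the Fourier coefficients of g_0 are majorized in absolute value by those of G_0, yet g_0 has the larger L^p norm.) -/
open MeasureTheory Finset

open intervalIntegral
open scoped Real

namespace Majorant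

noncomputable section

/-- complex exponential `e(kx)` -/
def eC (k : ℤ) (x : ℝ) : ℂ := Complex.exp (2 * π * Complex.I * k * x)

/-- Fourier coefficients of `|2 cos π x|^p`. -/
def cc (p : ℝ) (d : ℤ) : ℂ :=
  ∫ x in (-(1/2) : ℝ)..(1/2), ((2 * Real.cos (π * x)) ^ p : ℝ) * eC (-d) x

variable {p : ℝ}

lemma cos_pos_of_Ioo {x : ℝ} (hx : x ∈ Set.Ioo (-(1/2) : ℝ) (1/2)) : 0 < Real.cos (π * x) := by
  apply Real.cos_pos_of_mem_Ioo
  constructor <;> nlinarith [Real.pi_pos, hx.1, hx.2, Real.pi_gt_three]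

lemma continuous_eC (k : ℤ) : Continuous (eC k) := by
  unfold eC; fun_prop

lemma continuous_base : Continuous (fun x : ℝ => 2 * Real.cos (π * x)) := by fun_prop

lemma continuous_rpow_base (hq : 0 ≤ p) :
    Continuous (fun x : ℝ => (2 * Real.cos (π * x)) ^ p) :=
  continuous_base.rpow_const (fun x => Or.inr hq)

lemma cc_rec (hp : 0 < p) (d : ℤ) :
    (p - 2 * d) * cc p d = (p + 2 * d + 2) * cc p (d + 1) := by
  set c : ℂ := π * Complex.I * (-(2 * (d:ℂ) + 1)) with hc
  set F : ℝ → ℂ := fun x => ((2 * Real.cos (π * x)) ^ (p+1) : ℝ) * Complex.exp (c * x) with hF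
  set F' : ℝ → ℂ := fun x => (π * Complex.I) *
      (((2 * Real.cos (π * x)) ^ p : ℝ) *
        ((p - 2 * d) * eC (-d) x - (p + 2 * d + 2) * eC (-(d+1)) x)) with hF'
  have hderiv : ∀ x ∈ Set.Ioo (-(1/2) : ℝ) (1/2), HasDerivAt F (F' x) x := by
    intro x hx
    have hcos := cos_pos_of_Ioo hx
    have hbase : (0:ℝ) < 2 * Real.cos (π * x) := by linarith
    have h1 : HasDerivAt (fun y : ℝ => 2 * Real.cos (π * y)) (2 * (-Real.sin (π * x) * π)) x := by
      have := ((Real.hasDerivAt_cos (π * x)).comp x ((hasDerivAt_id x).const_mul π)).const_mul 2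
      simpa using this
    have h2 : HasDerivAt (fun y : ℝ => (2 * Real.cos (π * y)) ^ (p+1))
        ((2 * (-Real.sin (π * x) * π)) * (p+1) * (2 * Real.cos (π * x)) ^ p) x := by
      have := h1.rpow_const (p := p + 1) (Or.inl hbase.ne')
      simpa [add_sub_cancel_right] using this
    have h3 := h2.ofReal_comp
    have h4 : HasDerivAt (fun y : ℝ => Complex.exp (c * y)) (c * Complex.exp (c * x)) x := by
      have : HasDerivAt (fun z : ℂ => Complex.exp (c * z)) (c * Complex.exp (c * x)) (x:ℂ) := by
        simpa [mul_comm] using ((hasDerivAt_id (x:ℂ)).const_mul c).cexp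
      exact this.comp_ofReal
    have h5 := h3.mul h4
    convert h5 using 1
    case e'_4 => rfl
    case e'_8 => rfl
    -- now prove the algebraic identity
    set e₁ := Complex.exp ((↑(π * x) : ℂ) * Complex.I) with he₁
    set e₂ := Complex.exp (-(↑(π * x) : ℂ) * Complex.I) with he₂
    have hA : eC (-d) x = Complex.exp (c * x) * e₁ := by
      rw [he₁, ← Complex.exp_add, eC]; congr 1; push_cast; ring
    have hB : eC (-(d+1)) x = Complex.exp (c * x) * e₂ := by
      rw [he₂, ← Complex.exp_add, eC]; congr 1; push_cast; ring
    have hsin : (↑(Real.sin (π * x)) : ℂ) = (e₂ - e₁) * Complex.I / 2 := by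
      rw [Complex.ofReal_sin, Complex.sin, he₁, he₂]
    have hcosc : (↑(Real.cos (π * x)) : ℂ) = (e₁ + e₂) / 2 := by
      rw [Complex.ofReal_cos, Complex.cos, he₁, he₂]
    have hpow : ((2 * Real.cos (π * x)) ^ (p+1) : ℝ) =
        ((2 * Real.cos (π * x)) ^ p : ℝ) * (2 * Real.cos (π * x)) :=
      Real.rpow_add_one hbase.ne' p
    simp only [hF', hA, hB, hpow]
    push_cast [hsin, hcosc]
    ring
  have hcontF : Continuous F := by
    apply Continuous.mul
    · exact Complex.continuous_ofReal.comp (continuous_rpow_base (by linarith))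
    · exact Complex.continuous_exp.comp (by fun_prop)
  have hcontF' : Continuous F' := by
    apply Continuous.mul continuous_const
    apply Continuous.mul
    · exact Complex.continuous_ofReal.comp (continuous_rpow_base hp.le)
    · exact (continuous_const.mul (continuous_eC (-d))).sub (continuous_const.mul (continuous_eC (-(d+1))))
  have key : ∫ x in (-(1/2) : ℝ)..(1/2), F' x = F (1/2) - F (-(1/2)) :=
    integral_eq_sub_of_hasDerivAt_of_le (by norm_num) hcontF.continuousOn hderiv
      (hcontF'.intervalIntegrable _ _)
  have hF2 : F (1/2) = 0 := by
    have : Real.cos (π * (1/2)) = 0 := by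
      rw [show π * (1/2) = π/2 by ring, Real.cos_pi_div_two]
    simp only [hF, this, mul_zero, Real.zero_rpow (by positivity : p + 1 ≠ 0),
      Complex.ofReal_zero, zero_mul]
  have hF1 : F (-(1/2)) = 0 := by
    have : Real.cos (π * (-(1/2))) = 0 := by
      rw [show π * (-(1/2)) = -(π/2) by ring, Real.cos_neg, Real.cos_pi_div_two]
    simp only [hF, this, mul_zero, Real.zero_rpow (by positivity : p + 1 ≠ 0),
      Complex.ofReal_zero, zero_mul]
  -- linearity
  have hint1 : IntervalIntegrable (fun x : ℝ => ((2 * Real.cos (π * x)) ^ p : ℝ) * eC (-d) x)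
      volume (-(1/2)) (1/2) := by
    apply Continuous.intervalIntegrable
    exact (Complex.continuous_ofReal.comp (continuous_rpow_base hp.le)).mul (continuous_eC _)
  have hint2 : IntervalIntegrable (fun x : ℝ => ((2 * Real.cos (π * x)) ^ p : ℝ) * eC (-(d+1)) x)
      volume (-(1/2)) (1/2) := by
    apply Continuous.intervalIntegrable
    exact (Complex.continuous_ofReal.comp (continuous_rpow_base hp.le)).mul (continuous_eC _)
  have hsplit : ∫ x in (-(1/2) : ℝ)..(1/2), F' x =
      (π * Complex.I) * ((p - 2*d) * cc p d - (p + 2*d + 2) * cc p (d+1)) := by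
    have : F' = fun x => ((π * Complex.I) * (p - 2*(d:ℂ))) *
          (((2 * Real.cos (π * x)) ^ p : ℝ) * eC (-d) x)
        - ((π * Complex.I) * (p + 2*(d:ℂ) + 2)) *
          (((2 * Real.cos (π * x)) ^ p : ℝ) * eC (-(d+1)) x) := by
      funext x; simp only [hF']; ring
    rw [this, intervalIntegral.integral_sub ((hint1.const_mul _)) ((hint2.const_mul _)),
      intervalIntegral.integral_const_mul, intervalIntegral.integral_const_mul]
    unfold cc
    push_cast
    ring
  rw [key, hF2, hF1] at hsplit
  have hπI : (π : ℂ) * Complex.I ≠ 0 := by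
    simp [Real.pi_ne_zero, Complex.I_ne_zero, Complex.ofReal_ne_zero]
  have h0' : (π : ℂ) * Complex.I *
      (((p:ℂ) - 2*d) * cc p d - ((p:ℂ) + 2*d + 2) * cc p (d+1)) = 0 := by
    rw [← hsplit]; ring
  have h0 : ((p:ℂ) - 2*d) * cc p d - ((p:ℂ) + 2*d + 2) * cc p (d+1) = 0 :=
    (mul_eq_zero.mp h0').resolve_left hπI
  push_cast
  linear_combination h0

/-! ### The coefficient sequence -/

def g0 (p : ℝ) : ℝ := ∫ x in (-(1/2) : ℝ)..(1/2), (2 * Real.cos (π * x)) ^ p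

def γ (p : ℝ) : ℕ → ℝ
  | 0 => g0 p
  | n+1 => (p - 2*n) / (p + 2*n + 2) * γ p n

lemma g0_pos (hp : 0 < p) : 0 < g0 p := by
  apply intervalIntegral.intervalIntegral_pos_of_pos_on
    ((continuous_rpow_base hp.le).intervalIntegrable _ _)
  · intro x hx
    exact Real.rpow_pos_of_pos (by have := cos_pos_of_Ioo hx; linarith) p
  · norm_num

lemma cc_zero (hp : 0 < p) : cc p 0 = (g0 p : ℂ) := by
  unfold cc g0
  rw [← intervalIntegral.integral_ofReal]
  apply intervalIntegral.integral_congr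
  intro x _
  simp [eC]

lemma cc_nat (hp : 0 < p) (n : ℕ) : cc p n = (γ p n : ℂ) := by
  induction n with
  | zero => simpa [γ] using cc_zero hp
  | succ n ih =>
    have hrec := cc_rec hp n
    rw [ih] at hrec
    have hden : ((p : ℂ) + 2*(n:ℤ) + 2) ≠ 0 := by
      have : (0:ℝ) < p + 2*n + 2 := by positivity
      intro h
      apply this.ne'
      have := congrArg Complex.re h
      simpa using this
    have : cc p ((n:ℤ) + 1) = ((p - 2*n) / (p + 2*n + 2) * γ p n : ℝ) := by
      push_cast at hrec ⊢
      rw [div_mul_eq_mul_div, eq_div_iff (by simpa using hden)]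
      linear_combination -hrec
    rw [show ((n+1 : ℕ) : ℤ) = (n:ℤ) + 1 by push_cast; ring, this]
    norm_num [γ]

lemma cc_neg (d : ℤ) : cc p (-d) = cc p d := by
  unfold cc
  have := intervalIntegral.integral_comp_neg
    (a := (-(1/2) : ℝ)) (b := (1/2 : ℝ))
    (fun x => ((2 * Real.cos (π * x)) ^ p : ℝ) * eC (-d) x)
  norm_num at this
  rw [← this]
  apply intervalIntegral.integral_congr
  intro x _
  show (_ * eC (- -d) x : ℂ) = _ * eC (-d) (-x)
  congr 1
  unfold eC; congr 1; push_cast; ring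

lemma cc_int (hp : 0 < p) (d : ℤ) : cc p d = (γ p d.natAbs : ℂ) := by
  rcases le_or_gt 0 d with h | h
  · obtain ⟨n, rfl⟩ := Int.eq_ofNat_of_zero_le h
    simpa using cc_nat hp n
  · have h1 : cc p d = cc p (d.natAbs : ℤ) := by
      rw [← cc_neg]; congr 1; omega
    rw [h1]; exact_mod_cast cc_nat hp d.natAbs

section Signs

variable (hp2 : 2 < p) (hpe : ∀ m : ℕ, p ≠ 2 * m)

/-- the ceiling index -/
def K (p : ℝ) : ℕ := ⌈p/2⌉₊

lemma K_def : K p = ⌈p/2⌉₊ := rfl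

include hp2 hpe in
lemma half_lt_K : p / 2 < K p := by
  rw [K_def]
  rcases lt_or_eq_of_le (Nat.le_ceil (p/2)) with h | h
  · exact h
  · exact absurd (by linarith : p = 2 * (⌈p/2⌉₊ : ℝ)) (hpe _)

include hp2 in
lemma K_lt : (K p : ℝ) < p / 2 + 1 := by
  rw [K_def]; exact Nat.ceil_lt_add_one (by positivity)

include hp2 in
lemma two_le_K : 2 ≤ K p := by
  rw [K_def]
  have h1 : (1:ℝ) < p/2 := by linarith
  exact Nat.lt_ceil.mpr (by exact_mod_cast h1)

include hp2 hpe in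
lemma gamma_pos_of_le {n : ℕ} (hn : n ≤ K p) : 0 < γ p n := by
  induction n with
  | zero => exact g0_pos (by linarith)
  | succ n ih =>
    have hn' : n < K p := hn
    have h1 : (n : ℝ) < p / 2 := by
      have : ((n:ℝ)) + 1 ≤ K p := by exact_mod_cast hn
      have := K_lt (p := p) hp2
      linarith
    have hnum : 0 < p - 2*n := by linarith
    have hden : 0 < p + 2*n + 2 := by positivity
    have := ih (Nat.le_of_lt hn')
    show 0 < (p - 2*n) / (p + 2*n + 2) * γ p n
    positivity

include hp2 hpe in
lemma gamma_sign (m : ℕ) : 0 < (-1:ℝ)^m * γ p (K p + m) := by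
  induction m with
  | zero => simpa using gamma_pos_of_le hp2 hpe (le_refl (K p))
  | succ m ih =>
    have h1 : p/2 < K p + m := by
      have := half_lt_K (p := p) hp2 hpe
      have : (K p : ℝ) ≤ K p + m := by push_cast; linarith [Nat.cast_nonneg (α := ℝ) m]
      linarith [half_lt_K (p := p) hp2 hpe]
    have hnum : p - 2*(K p + m : ℕ) < 0 := by push_cast at h1 ⊢; linarith
    have hden : (0:ℝ) < p + 2*(K p + m : ℕ) + 2 := by positivity
    have hstep : γ p (K p + (m+1)) = (p - 2*(K p + m : ℕ)) / (p + 2*(K p + m : ℕ) + 2)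
        * γ p (K p + m) := by
      rw [show K p + (m+1) = (K p + m) + 1 by ring]
      rfl
    rw [hstep]
    rw [pow_succ]
    rcases (mul_pos_iff.mp ih) with ⟨h2, h3⟩ | ⟨h2, h3⟩
    · have : (p - 2*(K p + m : ℕ)) / (p + 2*(K p + m : ℕ) + 2) < 0 := div_neg_of_neg_of_pos hnum hden
      nlinarith
    · have : (p - 2*(K p + m : ℕ)) / (p + 2*(K p + m : ℕ) + 2) < 0 := div_neg_of_neg_of_pos hnum hden
      nlinarith

include hp2 hpe in
lemma gamma_ne_zero (n : ℕ) : γ p n ≠ 0 := by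
  rcases le_or_gt n (K p) with h | h
  · exact (gamma_pos_of_le hp2 hpe h).ne'
  · have := gamma_sign hp2 hpe (n - K p)
    rw [Nat.add_sub_cancel' h.le] at this
    rcases mul_pos_iff.mp this with ⟨_, h2⟩ | ⟨_, h2⟩
    · exact h2.ne'
    · exact h2.ne

end Signs

section Decay

variable (hp2 : 2 < p) (hpe : ∀ m : ℕ, p ≠ 2 * m)

include hp2 in
lemma gamma_ratio {n : ℕ} (hn : p/2 < n) :
    |γ p (n+1)| * ((n:ℝ)+1)^3 ≤ |γ p n| * (n:ℝ)^3 := by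
  have h1 : γ p (n+1) = (p - 2*n)/(p + 2*n + 2) * γ p n := rfl
  have hden : (0:ℝ) < p + 2*n + 2 := by positivity
  have hnum : p - 2*(n:ℝ) < 0 := by linarith
  have hn0 : (0:ℝ) ≤ n := Nat.cast_nonneg n
  have key : (2*(n:ℝ) - p) * ((n:ℝ)+1)^3 ≤ (n:ℝ)^3 * (p+2*n+2) := by
    nlinarith [mul_nonneg (sub_nonneg.mpr hp2.le) (pow_nonneg hn0 3),
      mul_nonneg (sub_nonneg.mpr hp2.le) (sq_nonneg (n:ℝ)),
      mul_nonneg (sub_nonneg.mpr hp2.le) hn0, hn0]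
  rw [h1, abs_mul, abs_div, abs_of_pos hden, abs_of_neg hnum, neg_sub]
  rw [div_mul_eq_mul_div, div_mul_eq_mul_div, div_le_iff₀ hden]
  have hγ := abs_nonneg (γ p n)
  nlinarith [mul_le_mul_of_nonneg_left key hγ]

include hp2 hpe in
lemma gamma_decay : ∀ m : ℕ,
    |γ p (K p + m)| * ((K p + m : ℕ):ℝ)^3 ≤ |γ p (K p)| * ((K p : ℕ):ℝ)^3 := by
  intro m
  induction m with
  | zero => simp
  | succ m ih =>
    have hx : p/2 < (K p + m : ℕ) := by
      have := half_lt_K hp2 hpe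
      push_cast
      linarith [Nat.cast_nonneg (α := ℝ) m]
    have := gamma_ratio hp2 (n := K p + m) hx
    calc |γ p (K p + (m+1))| * ((K p + (m+1) : ℕ):ℝ)^3
        = |γ p ((K p + m) + 1)| * (((K p + m : ℕ):ℝ)+1)^3 := by
          rw [show K p + (m+1) = (K p + m) + 1 by ring]; push_cast; ring_nf
      _ ≤ |γ p (K p + m)| * ((K p + m : ℕ):ℝ)^3 := this
      _ ≤ _ := ih

include hp2 hpe in
lemma gamma_abs_summable : Summable (fun n : ℕ => |γ p n|) := by
  rw [← summable_nat_add_iff (K p)]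
  set C := |γ p (K p)| * ((K p : ℕ):ℝ)^3 with hC
  have hC0 : 0 ≤ C := by positivity
  have hsum : Summable (fun n : ℕ => C * (1/((n:ℝ)+1)^3)) := by
    apply Summable.mul_left
    have h := (Real.summable_one_div_nat_pow (p := 3)).mpr (by norm_num)
    have := (summable_nat_add_iff 1).mpr h
    apply this.congr
    intro n; push_cast; ring_nf
  apply Summable.of_nonneg_of_le (fun n => abs_nonneg _) ?_ hsum
  intro n
  have hK1 : 1 ≤ K p := le_trans (by norm_num) (two_le_K hp2)
  have hd := gamma_decay hp2 hpe n
  have hpos : (0:ℝ) < ((K p + n : ℕ):ℝ)^3 := by positivity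
  have h2 : |γ p (K p + n)| ≤ C / ((K p + n : ℕ):ℝ)^3 := by
    rw [le_div_iff₀ hpos]; exact hd
  have h3 : ((n:ℝ)+1)^3 ≤ ((K p + n : ℕ):ℝ)^3 := by
    apply pow_le_pow_left₀ (by positivity)
    push_cast
    have : (1:ℝ) ≤ K p := by exact_mod_cast hK1
    linarith
  calc |γ p (n + K p)| = |γ p (K p + n)| := by rw [Nat.add_comm]
    _ ≤ C / ((K p + n : ℕ):ℝ)^3 := h2
    _ ≤ C / ((n:ℝ)+1)^3 := by
        apply div_le_div_of_nonneg_left hC0 (by positivity) h3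
    _ = C * (1/((n:ℝ)+1)^3) := by ring

end Decay

/-! ### The function and its Fourier expansion -/

def Φr (p : ℝ) (y : ℝ) : ℝ := (2 + 2 * Real.cos (2 * π * y)) ^ (p/2)

lemma base_sq (y : ℝ) : 2 + 2 * Real.cos (2 * π * y) = (2 * Real.cos (π * y))^2 := by
  rw [show 2 * π * y = 2 * (π * y) by ring, Real.cos_two_mul]; ring

lemma Φr_nonneg (y : ℝ) : 0 ≤ Φr p y := by
  unfold Φr
  apply Real.rpow_nonneg
  rw [base_sq]; positivity

lemma Φr_eq_abs (y : ℝ) : Φr p y = |2 * Real.cos (π * y)| ^ p := by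
  unfold Φr
  rw [base_sq, ← sq_abs, ← Real.rpow_natCast |2 * Real.cos (π * y)| 2,
    ← Real.rpow_mul (abs_nonneg _)]
  congr 1
  push_cast; ring

lemma Φr_eq_of_Icc {x : ℝ} (hx : x ∈ Set.Icc (-(1/2):ℝ) (1/2)) :
    Φr p x = (2 * Real.cos (π * x)) ^ p := by
  rw [Φr_eq_abs]
  congr 1
  rw [abs_of_nonneg]
  have : 0 ≤ Real.cos (π * x) := by
    apply Real.cos_nonneg_of_mem_Icc
    constructor <;> nlinarith [Real.pi_pos, hx.1, hx.2]
  linarith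

lemma Φr_periodic : Function.Periodic (Φr p) 1 := by
  intro y
  unfold Φr
  rw [show 2 * π * (y + 1) = 2 * π * y + 2 * π by ring, Real.cos_add_two_pi]

lemma Φr_continuous (hp : 0 ≤ p) : Continuous (Φr p) := by
  apply Continuous.rpow_const (by fun_prop)
  intro y; right; positivity

lemma Φr_le (hp : 0 ≤ p) (y : ℝ) : Φr p y ≤ 4 ^ (p/2) := by
  unfold Φr
  apply Real.rpow_le_rpow _ _ (by positivity)
  · rw [base_sq]; positivity
  · nlinarith [Real.neg_one_le_cos (2 * π * y), Real.cos_le_one (2 * π * y)]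

section Fourier

instance : Fact ((0:ℝ) < 1) := ⟨one_pos⟩

def ΦC (p : ℝ) (hp : 0 ≤ p) : C(AddCircle (1:ℝ), ℂ) :=
  ⟨((Φr_periodic (p := p)).comp (fun t : ℝ => (t : ℂ))).lift,
    continuous_coinduced_dom.mpr (Complex.continuous_ofReal.comp (Φr_continuous hp))⟩

lemma ΦC_coe (hp : 0 ≤ p) (x : ℝ) : ΦC p hp (x : AddCircle (1:ℝ)) = (Φr p x : ℂ) := by
  change (((Φr_periodic (p := p)).comp (fun t : ℝ => (t : ℂ))).lift (x : AddCircle (1:ℝ))) = _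
  rw [Function.Periodic.lift_coe]
  rfl

lemma fourierCoeff_ΦC (hp : 0 < p) (d : ℤ) :
    fourierCoeff (⇑(ΦC p hp.le)) d = (γ p d.natAbs : ℂ) := by
  rw [← cc_int hp d]
  rw [fourierCoeff_eq_intervalIntegral _ d (-(1/2))]
  have hb : (-(1/2) : ℝ) + 1 = 1/2 := by norm_num
  rw [hb]
  unfold cc
  rw [one_div, inv_one, one_smul]
  apply intervalIntegral.integral_congr
  intro x hx
  have hx' : x ∈ Set.Icc (-(1/2):ℝ) (1/2) := by
    rwa [Set.uIcc_of_le (by norm_num)] at hx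
  simp only [smul_eq_mul]
  rw [ΦC_coe hp.le x, Φr_eq_of_Icc hx', fourier_coe_apply]
  unfold eC
  rw [mul_comm]
  congr 1
  push_cast
  ring

lemma Φr_hasSum (hp2 : 2 < p) (hpe : ∀ m : ℕ, p ≠ 2 * m) (y : ℝ) :
    HasSum (fun d : ℤ => (γ p d.natAbs : ℂ) * eC d y) ((Φr p y : ℂ)) := by
  have hp : 0 < p := by linarith
  have hsummable : Summable (fourierCoeff (⇑(ΦC p hp.le))) := by
    apply Summable.of_norm
    have : (fun d : ℤ => ‖fourierCoeff (⇑(ΦC p hp.le)) d‖) = fun d => |γ p d.natAbs| := by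
      funext d
      rw [fourierCoeff_ΦC hp d, Complex.norm_real, Real.norm_eq_abs]
    rw [this]
    apply Summable.of_nat_of_neg
    · simpa using gamma_abs_summable hp2 hpe
    · have : (fun n : ℕ => |γ p (-(n:ℤ)).natAbs|) = fun n => |γ p n| := by
        funext n; simp
      rw [this]; exact gamma_abs_summable hp2 hpe
  have h := has_pointwise_sum_fourier_series_of_summable hsummable (y : AddCircle (1:ℝ))
  rw [ΦC_coe] at h
  have heq : (fun d : ℤ => (γ p d.natAbs : ℂ) * eC d y)
      = fun i => fourierCoeff (⇑(ΦC p hp.le)) i • fourier i (y : AddCircle (1:ℝ)) := by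
    funext d
    rw [fourierCoeff_ΦC hp d, smul_eq_mul, fourier_coe_apply]
    unfold eC
    congr 1
    push_cast
    ring
  rw [heq]
  exact h

end Fourier

/-! ### Orthogonality and sum-integral swaps -/

lemma eC_add (a b : ℤ) (x : ℝ) : eC a x * eC b x = eC (a+b) x := by
  unfold eC
  rw [← Complex.exp_add]
  congr 1
  push_cast
  ring

lemma eC_mul_cast (d m : ℤ) (x : ℝ) : eC d ((m:ℝ) * x) = eC (d*m) x := by
  unfold eC
  congr 1
  push_cast
  ring

lemma eC_norm (k : ℤ) (x : ℝ) : ‖eC k x‖ = 1 := by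
  unfold eC
  rw [Complex.norm_exp]
  norm_num [Complex.mul_re, Complex.mul_im]

lemma eC_integral (k : ℤ) : (∫ x in (0:ℝ)..1, eC k x) = if k = 0 then 1 else 0 := by
  rcases eq_or_ne k 0 with rfl | hk
  · simp only [if_pos rfl]
    have : ∀ x : ℝ, eC 0 x = 1 := by intro x; unfold eC; norm_num
    rw [intervalIntegral.integral_congr (fun x _ => this x)]
    simp
  · rw [if_neg hk]
    set c : ℂ := 2 * π * Complex.I * k with hc
    have hc0 : c ≠ 0 := by
      simp [hc, Real.pi_ne_zero, Complex.I_ne_zero, hk]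
    have hderiv : ∀ x ∈ Set.uIcc (0:ℝ) 1,
        HasDerivAt (fun y : ℝ => Complex.exp (c * y) / c) (eC k x) x := by
      intro x _
      have : HasDerivAt (fun z : ℂ => Complex.exp (c * z) / c) (Complex.exp (c * x)) (x:ℂ) := by
        have h1 := ((hasDerivAt_id (x:ℂ)).const_mul c).cexp
        simpa [mul_comm, mul_div_assoc, mul_div_cancel_left₀ _ hc0] using h1.div_const c
      have h2 := this.comp_ofReal
      have : eC k x = Complex.exp (c * x) := by unfold eC; rw [hc]
      rw [this]
      exact h2
    have hint : IntervalIntegrable (eC k) volume 0 1 := (continuous_eC k).intervalIntegrable _ _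
    rw [intervalIntegral.integral_eq_sub_of_hasDerivAt hderiv hint]
    have h1 : Complex.exp (c * (1:ℝ)) = 1 := by
      rw [hc, show (2 * ↑π * Complex.I * ↑k * ((1:ℝ):ℂ)) = (k : ℂ) * (2 * π * Complex.I) by
        push_cast; ring]
      exact Complex.exp_int_mul_two_pi_mul_I k
    have h0 : Complex.exp (c * (0:ℝ)) = 1 := by norm_num
    rw [h1, h0]
    simp

lemma swap_lemma {f : ℤ → ℝ → ℂ} (hf : ∀ d, Continuous (f d)) {M : ℤ → ℝ}
    (hM : ∀ d x, x ∈ Set.Ioc (0:ℝ) 1 → ‖f d x‖ ≤ M d) (hMs : Summable M)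
    {S : ℝ → ℂ} (hS : ∀ x, HasSum (fun d => f d x) (S x)) :
    HasSum (fun d => ∫ x in (0:ℝ)..1, f d x) (∫ x in (0:ℝ)..1, S x) := by
  have hle : (0:ℝ) ≤ 1 := by norm_num
  have hrw : ∀ g : ℝ → ℂ, (∫ x in (0:ℝ)..1, g x) = ∫ x in Set.Ioc (0:ℝ) 1, g x := by
    intro g; rw [intervalIntegral.integral_of_le hle]
  have hμ : (volume (Set.Ioc (0:ℝ) 1)).toReal = 1 := by
    rw [Real.volume_Ioc]; norm_num
  have hint : ∀ d, Integrable (f d) (volume.restrict (Set.Ioc (0:ℝ) 1)) := by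
    intro d; exact (hf d).integrableOn_Ioc
  have hnormint : ∀ d, ∫ x in Set.Ioc (0:ℝ) 1, ‖f d x‖ ≤ M d := by
    intro d
    calc ∫ x in Set.Ioc (0:ℝ) 1, ‖f d x‖ ≤ ∫ _ in Set.Ioc (0:ℝ) 1, M d := by
          apply setIntegral_mono_on (hint d).norm (integrableOn_const (by simp))
            measurableSet_Ioc
          intro x hx; exact hM d x hx
      _ = M d := by rw [setIntegral_const, measureReal_def, hμ, one_smul]
  have hsum2 : Summable (fun d => ∫ x in Set.Ioc (0:ℝ) 1, ‖f d x‖) := by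
    apply Summable.of_nonneg_of_le (fun d => integral_nonneg (fun x => norm_nonneg _)) hnormint hMs
  have h := MeasureTheory.hasSum_integral_of_summable_integral_norm
    (μ := volume.restrict (Set.Ioc (0:ℝ) 1)) hint hsum2
  simp only [hrw]
  have heq : (∫ x in Set.Ioc (0:ℝ) 1, S x) = ∫ x in Set.Ioc (0:ℝ) 1, (∑' d, f d x) :=
    integral_congr_ae (Filter.Eventually.of_forall fun x => ((hS x).tsum_eq).symm)
  rw [heq]
  exact h

/-! ### Master computation -/

section Master

variable (hp2 : 2 < p) (hpe : ∀ m : ℕ, p ≠ 2 * m)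

include hp2 hpe in
lemma gamma_int_summable {w : ℤ} (hw : w ≠ 0) :
    Summable (fun s : ℤ => |γ p (s*w).natAbs|) := by
  have hinj : Function.Injective (fun n : ℕ => n * w.natAbs) := fun a b h => by
    exact Nat.eq_of_mul_eq_mul_right (Nat.pos_of_ne_zero (Int.natAbs_ne_zero.mpr hw)) h
  apply Summable.of_nat_of_neg
  · have : (fun n : ℕ => |γ p ((n:ℤ)*w).natAbs|)
        = (fun m : ℕ => |γ p m|) ∘ (fun n : ℕ => n * w.natAbs) := by
      funext n; simp [Function.comp, Int.natAbs_mul]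
    rw [this]
    exact (gamma_abs_summable hp2 hpe).comp_injective hinj
  · have : (fun n : ℕ => |γ p ((-(n:ℤ))*w).natAbs|)
        = (fun m : ℕ => |γ p m|) ∘ (fun n : ℕ => n * w.natAbs) := by
      funext n; simp [Function.comp, Int.natAbs_mul]
    rw [this]
    exact (gamma_abs_summable hp2 hpe).comp_injective hinj

include hp2 hpe in
lemma gamma_natAbs_summable : Summable (fun d : ℤ => |γ p d.natAbs|) := by
  have := gamma_int_summable hp2 hpe (w := 1) one_ne_zero
  simpa using this

include hp2 hpe in
lemma master {j : ℤ} (hj2 : 2 ≤ j) (τ : ℤ → ℂ) (hτ : ∀ d, ‖τ d‖ = 1)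
    {G : ℝ → ℂ} (hGcont : Continuous G)
    (hGbound : ∀ x, ‖G x‖ ≤ 4 ^ (p/2))
    (hG : ∀ x : ℝ, HasSum (fun d : ℤ => (γ p d.natAbs : ℂ) * τ d * eC (d*(j+1)) x) (G x)) :
    HasSum (fun s : ℤ => (γ p (s*(j+1)).natAbs : ℂ) * ((γ p (s*j).natAbs : ℂ) * τ (-(s*j))))
      (∫ x in (0:ℝ)..1, (Φr p ((j:ℝ) * x) : ℂ) * G x) := by
  have hp : 0 < p := by linarith
  have hj1 : (j:ℤ) + 1 ≠ 0 := by omega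
  have hcop : IsCoprime ((j:ℤ)+1) j := ⟨1, -1, by ring⟩
  set γc : ℤ → ℂ := fun d => (γ p d.natAbs : ℂ) with hγc
  set J : ℤ → ℂ := fun m => ∫ x in (0:ℝ)..1, eC (m*j) x * G x with hJdef
  -- inner sums
  have hJtsum : ∀ m : ℤ, HasSum
      (fun d : ℤ => γc d * τ d * (if m*j + d*(j+1) = 0 then 1 else 0)) (J m) := by
    intro m
    have hswap := swap_lemma
      (f := fun d x => γc d * τ d * (eC (m*j + d*(j+1)) x))
      (fun d => (continuous_const.mul (continuous_eC _)))
      (M := fun d => |γ p d.natAbs|)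
      (fun d x _ => by
        rw [norm_mul, norm_mul, eC_norm, hγc, Complex.norm_real, Real.norm_eq_abs, hτ d]
        simp)
      (gamma_natAbs_summable hp2 hpe)
      (S := fun x => eC (m*j) x * G x)
      (fun x => by
        have h1 := (hG x).mul_left (eC (m*j) x)
        have heq : (fun d : ℤ => eC (m*j) x * (γc d * τ d * eC (d*(j+1)) x))
            = fun d => γc d * τ d * (eC (m*j + d*(j+1)) x) := by
          funext d
          rw [← eC_add]
          ring
        rwa [heq] at h1)
    have heq2 : (fun d : ℤ => ∫ x in (0:ℝ)..1, γc d * τ d * (eC (m*j + d*(j+1)) x))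
        = fun d : ℤ => γc d * τ d * (if m*j + d*(j+1) = 0 then 1 else 0) := by
      funext d
      rw [intervalIntegral.integral_const_mul, eC_integral]
    rwa [heq2] at hswap
  have hJ0 : ∀ m : ℤ, ¬ ((j+1) ∣ m) → J m = 0 := by
    intro m hm
    have : (fun d : ℤ => γc d * τ d * (if m*j + d*(j+1) = 0 then 1 else 0))
        = fun _ => (0:ℂ) := by
      funext d
      rw [if_neg, mul_zero]
      intro h0
      exact hm (hcop.dvd_of_dvd_mul_right ⟨-d, by linear_combination h0⟩)
    have h := hJtsum m
    rw [this] at h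
    exact h.unique hasSum_zero
  have hJs : ∀ s : ℤ, J (s*(j+1)) = γc (s*j) * τ (-(s*j)) := by
    intro s
    have h := hJtsum (s*(j+1))
    have hsingle : HasSum
        (fun d : ℤ => γc d * τ d * (if (s*(j+1))*j + d*(j+1) = 0 then 1 else 0))
        (γc (-(s*j)) * τ (-(s*j)) * (if (s*(j+1))*j + (-(s*j))*(j+1) = 0 then 1 else 0)) := by
      apply hasSum_single
      intro b hb
      rw [if_neg, mul_zero]
      intro h0
      apply hb
      have : (b + s*j) * (j+1) = 0 := by linear_combination h0
      rcases mul_eq_zero.mp this with h | h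
      · omega
      · exact absurd h hj1
    have hval : γc (-(s*j)) * τ (-(s*j)) * (if (s*(j+1))*j + (-(s*j))*(j+1) = 0 then 1 else 0)
        = γc (s*j) * τ (-(s*j)) := by
      have hn : γc (-(s*j)) = γc (s*j) := by simp [hγc]
      rw [if_pos (by ring), mul_one, hn]
    rw [← hval]
    exact h.unique hsingle
  -- outer swap
  have houter := swap_lemma
    (f := fun m x => γc m * (eC (m*j) x * G x))
    (fun m => continuous_const.mul ((continuous_eC _).mul hGcont))
    (M := fun m => |γ p m.natAbs| * 4 ^ (p/2))
    (fun m x _ => by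
      rw [norm_mul, norm_mul, eC_norm, one_mul, hγc, Complex.norm_real, Real.norm_eq_abs]
      exact mul_le_mul_of_nonneg_left (hGbound x) (abs_nonneg _))
    ((gamma_natAbs_summable hp2 hpe).mul_right _)
    (S := fun x => (Φr p ((j:ℝ) * x) : ℂ) * G x)
    (fun x => by
      have h1 := (Φr_hasSum hp2 hpe ((j:ℝ) * x)).mul_right (G x)
      have heq : (fun d : ℤ => ((γ p d.natAbs : ℂ) * eC d ((j:ℝ)*x)) * G x)
          = fun m => γc m * (eC (m*j) x * G x) := by
        funext d
        rw [eC_mul_cast]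
        ring
      rwa [heq] at h1)
  have houter' : HasSum (fun m : ℤ => γc m * J m)
      (∫ x in (0:ℝ)..1, (Φr p ((j:ℝ) * x) : ℂ) * G x) := by
    have heq : (fun m : ℤ => ∫ x in (0:ℝ)..1, γc m * (eC (m*j) x * G x))
        = fun m => γc m * J m := by
      funext m
      rw [intervalIntegral.integral_const_mul]
    rwa [heq] at houter
  -- reindex over multiples of j+1
  have hinj : Function.Injective (fun s : ℤ => s * (j+1)) := fun a b h => by
    exact mul_right_cancel₀ hj1 h
  have hzero : ∀ m : ℤ, m ∉ Set.range (fun s : ℤ => s * (j+1)) → γc m * J m = 0 := by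
    intro m hm
    have hnd : ¬ ((j+1) ∣ m) := by
      rintro ⟨c, hc⟩
      exact hm ⟨c, by rw [hc, mul_comm]⟩
    rw [hJ0 m hnd, mul_zero]
  have hfinal := (Function.Injective.hasSum_iff hinj hzero).mpr houter'
  have heq : ((fun m : ℤ => γc m * J m) ∘ (fun s : ℤ => s * (j+1)))
      = fun s : ℤ => (γ p (s*(j+1)).natAbs : ℂ) * ((γ p (s*j).natAbs : ℂ) * τ (-(s*j))) := by
    funext s
    simp only [Function.comp]
    rw [hJs s]
  rwa [heq] at hfinal

end Master

/-! ### The two cases and the strict inequality -/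

section Final

variable (hp2 : 2 < p) (hpe : ∀ m : ℕ, p ≠ 2 * m)

lemma exp_pi_int (n : ℤ) : Complex.exp (π * Complex.I * n) = if Even n then 1 else -1 := by
  rw [show (π : ℂ) * Complex.I * n = n * (π * Complex.I) by ring, Complex.exp_int_mul,
    Complex.exp_pi_mul_I]
  rcases Int.even_or_odd n with h | h
  · rw [if_pos h, h.neg_one_zpow]
  · rw [if_neg (Int.not_even_iff_odd.mpr h), h.neg_one_zpow]

def τm : ℤ → ℂ := fun d => Complex.exp (π * Complex.I * (-d))

lemma τm_norm (d : ℤ) : ‖τm d‖ = 1 := by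
  unfold τm
  rw [show (π:ℂ) * Complex.I * (-(d:ℂ)) = (π:ℂ) * Complex.I * ((-d : ℤ):ℂ) by push_cast; ring,
    exp_pi_int]
  split <;> simp

/-- the difference coefficients -/
def δd (p : ℝ) (j : ℤ) (s : ℤ) : ℝ :=
  (if Even s then 0 else (-2:ℝ)) * (γ p (s*(j+1)).natAbs * γ p (s*j).natAbs)

include hp2 hpe in
lemma prod_neg {j : ℤ} (hj : Odd j) (hjp : p/2 < j) {s : ℤ} (hs : Odd s) :
    γ p (s*(j+1)).natAbs * γ p (s*j).natAbs < 0 := by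
  have hj2 : 2 ≤ j := by
    have h1 : (1:ℝ) < j := by linarith
    have h2 : (1:ℤ) < j := by exact_mod_cast h1
    omega
  set u := s.natAbs with hu
  set jn := j.natAbs with hjn
  have hjnat : (jn:ℤ) = j := Int.natAbs_of_nonneg (by omega)
  have hjcast : (jn : ℝ) = (j : ℝ) := by exact_mod_cast hjnat
  have hKj : K p ≤ jn := by
    rw [K_def]
    apply Nat.ceil_le.mpr
    rw [hjcast]
    linarith
  have hu1 : 1 ≤ u := by
    have hs0 : s ≠ 0 := by rintro rfl; exact (by decide : ¬ Odd (0:ℤ)) hs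
    exact Nat.one_le_iff_ne_zero.mpr (by simpa [hu] using Int.natAbs_ne_zero.mpr hs0)
  have hn1 : (s*j).natAbs = u * jn := by rw [hu, hjn, Int.natAbs_mul]
  have hn2 : (s*(j+1)).natAbs = u * (jn + 1) := by
    rw [hu, Int.natAbs_mul]
    congr 1
    omega
  have hK1 : K p ≤ u * jn := le_trans hKj (Nat.le_mul_of_pos_left _ hu1)
  have hK2 : K p ≤ u * (jn + 1) := le_trans hK1 (Nat.mul_le_mul_left u (by omega))
  set m₁ := u * jn - K p with hm₁
  set m₂ := u * (jn + 1) - K p with hm₂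
  have e₁ : K p + m₁ = u * jn := by omega
  have e₂ : K p + m₂ = u * (jn + 1) := by omega
  have hoddsum : Odd (m₁ + m₂) := by
    have husum : m₁ + m₂ = 2 * m₁ + u := by
      have : u * (jn + 1) = u * jn + u := by ring
      omega
    rw [husum]
    have hou : Odd u := Int.natAbs_odd.mpr hs
    rcases hou with ⟨t, ht⟩
    exact ⟨m₁ + t, by omega⟩
  have h1 := gamma_sign hp2 hpe m₁
  have h2 := gamma_sign hp2 hpe m₂
  have hprod := mul_pos h1 h2
  have hrw : ((-1:ℝ))^m₁ * γ p (K p + m₁) * ((-1:ℝ)^m₂ * γ p (K p + m₂))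
      = (-1:ℝ)^(m₁+m₂) * (γ p (K p + m₁) * γ p (K p + m₂)) := by
    rw [pow_add]; ring
  rw [hrw, hoddsum.neg_one_pow] at hprod
  rw [hn1, hn2, ← e₁, ← e₂]
  nlinarith

include hp2 hpe in
lemma δd_summable {j : ℤ} (hj2 : 2 ≤ j) : Summable (δd p j) := by
  set Cp := ∑' n : ℕ, |γ p n| with hCp
  have hb : ∀ n : ℕ, |γ p n| ≤ Cp :=
    fun n => Summable.le_tsum (gamma_abs_summable hp2 hpe) n (fun _ _ => abs_nonneg _)
  apply Summable.of_abs
  have hmaj : Summable (fun s : ℤ => (2*Cp) * |γ p (s*j).natAbs|) :=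
    (gamma_int_summable hp2 hpe (by omega : j ≠ 0)).mul_left _
  apply Summable.of_nonneg_of_le (fun s => abs_nonneg _) _ hmaj
  · intro s
    unfold δd
    rw [abs_mul, abs_mul]
    have h2 : |if Even s then (0:ℝ) else -2| ≤ 2 := by split <;> norm_num
    have h3 : |γ p (s*(j+1)).natAbs| ≤ Cp := hb _
    have h4 : (0:ℝ) ≤ |γ p (s*j).natAbs| := abs_nonneg _
    calc |if Even s then (0:ℝ) else -2| * (|γ p (s*(j+1)).natAbs| * |γ p (s*j).natAbs|)
        ≤ 2 * (Cp * |γ p (s*j).natAbs|) := by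
          apply mul_le_mul h2 (mul_le_mul_of_nonneg_right h3 h4) (by positivity) (by norm_num)
      _ = (2*Cp) * |γ p (s*j).natAbs| := by ring

include hp2 hpe in
lemma tsum_δd_pos {j : ℤ} (hj : Odd j) (hjp : p/2 < j) : 0 < ∑' s : ℤ, δd p j s := by
  have hj2 : 2 ≤ j := by
    have : (1:ℝ) < j := by linarith
    have : (1:ℤ) < j := by exact_mod_cast this
    omega
  apply Summable.tsum_pos (δd_summable hp2 hpe hj2) _ 1
  · unfold δd
    rw [if_neg (by simp [Int.even_iff] : ¬ Even (1:ℤ))]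
    have := prod_neg hp2 hpe hj hjp (odd_one)
    nlinarith
  · intro s
    unfold δd
    rcases Int.even_or_odd s with h | h
    · rw [if_pos h, zero_mul]
    · rw [if_neg (Int.not_even_iff_odd.mpr h)]
      have := prod_neg hp2 hpe hj hjp h
      nlinarith

include hp2 hpe in
lemma R_lt {j : ℤ} (hj : Odd j) (hjp : p/2 < j) :
    (∫ x in (0:ℝ)..1, Φr p ((j:ℝ)*x) * Φr p (((j:ℝ)+1)*x))
      < ∫ x in (0:ℝ)..1, Φr p ((j:ℝ)*x) * Φr p (((j:ℝ)+1)*x - 1/2) := by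
  have hp : 0 < p := by linarith
  have hj2 : 2 ≤ j := by
    have h1 : (1:ℝ) < j := by linarith
    have h2 : (1:ℤ) < j := by exact_mod_cast h1
    omega
  have hB : ∀ y : ℝ, ‖(Φr p y : ℂ)‖ ≤ 4^(p/2) := fun y => by
    rw [Complex.norm_real, Real.norm_eq_abs, abs_of_nonneg (Φr_nonneg y)]
    exact Φr_le hp.le y
  have hplus := master hp2 hpe hj2 (fun _ => (1:ℂ)) (fun _ => norm_one)
      (G := fun x => (Φr p (((j:ℝ)+1)*x) : ℂ))
      (Complex.continuous_ofReal.comp ((Φr_continuous hp.le).comp (by fun_prop)))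
      (fun x => hB _)
      (fun x => by
        have h := Φr_hasSum hp2 hpe (((j:ℝ)+1)*x)
        have heq : (fun d : ℤ => (γ p d.natAbs : ℂ) * eC d (((j:ℝ)+1)*x))
            = fun d => (γ p d.natAbs : ℂ) * 1 * eC (d*(j+1)) x := by
          funext d
          rw [mul_one]
          congr 1
          rw [show ((j:ℝ)+1) = (((j+1 : ℤ)):ℝ) by push_cast; ring, eC_mul_cast]
        rwa [heq] at h)
  have hminus := master hp2 hpe hj2 τm τm_norm
      (G := fun x => (Φr p (((j:ℝ)+1)*x - 1/2) : ℂ))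
      (Complex.continuous_ofReal.comp ((Φr_continuous hp.le).comp (by fun_prop)))
      (fun x => hB _)
      (fun x => by
        have h := Φr_hasSum hp2 hpe (((j:ℝ)+1)*x - 1/2)
        have heq : (fun d : ℤ => (γ p d.natAbs : ℂ) * eC d (((j:ℝ)+1)*x - 1/2))
            = fun d => (γ p d.natAbs : ℂ) * τm d * eC (d*(j+1)) x := by
          funext d
          rw [mul_assoc]
          congr 1
          unfold eC τm
          rw [← Complex.exp_add]
          congr 1
          push_cast
          ring
        rwa [heq] at h)
  have hdiff := hminus.sub hplus
  have heqδ : (fun s : ℤ =>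
        (γ p (s*(j+1)).natAbs : ℂ) * ((γ p (s*j).natAbs : ℂ) * τm (-(s*j)))
      - (γ p (s*(j+1)).natAbs : ℂ) * ((γ p (s*j).natAbs : ℂ) * (fun _ : ℤ => (1:ℂ)) (-(s*j))))
      = fun s => ((δd p j s : ℝ) : ℂ) := by
    funext s
    have hev : Even (s*j) ↔ Even s := by
      rw [Int.even_mul]
      constructor
      · rintro (h | h)
        · exact h
        · exact absurd h (Int.not_even_iff_odd.mpr hj)
      · intro h; exact Or.inl h
    have hτval : τm (-(s*j)) = if Even s then 1 else -1 := by
      unfold τm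
      rw [show (π:ℂ) * Complex.I * (-((-(s*j) : ℤ) : ℂ))
          = (π:ℂ)*Complex.I*(((s*j) : ℤ):ℂ) by push_cast; ring, exp_pi_int]
      exact if_congr hev rfl rfl
    rcases Int.even_or_odd s with h | h
    · rw [hτval, if_pos h]
      unfold δd
      rw [if_pos h]
      push_cast
      ring
    · rw [hτval, if_neg (Int.not_even_iff_odd.mpr h)]
      unfold δd
      rw [if_neg (Int.not_even_iff_odd.mpr h)]
      push_cast
      ring
  rw [heqδ] at hdiff
  have hδsum := (δd_summable hp2 hpe hj2).hasSum
  have hC : HasSum (fun s => ((δd p j s : ℝ):ℂ)) (((∑' s : ℤ, δd p j s : ℝ)) : ℂ) := by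
    have := ContinuousLinearMap.hasSum Complex.ofRealCLM hδsum
    simpa using this
  have huniq := hdiff.unique hC
  have hIp : (∫ x in (0:ℝ)..1, (Φr p ((j:ℝ)*x) : ℂ) * ((Φr p (((j:ℝ)+1)*x) : ℝ) : ℂ))
      = ((∫ x in (0:ℝ)..1, Φr p ((j:ℝ)*x) * Φr p (((j:ℝ)+1)*x) : ℝ) : ℂ) := by
    rw [← intervalIntegral.integral_ofReal]
    apply intervalIntegral.integral_congr
    intro x _
    push_cast
    ring
  have hIm : (∫ x in (0:ℝ)..1, (Φr p ((j:ℝ)*x) : ℂ) * ((Φr p (((j:ℝ)+1)*x - 1/2) : ℝ) : ℂ))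
      = ((∫ x in (0:ℝ)..1, Φr p ((j:ℝ)*x) * Φr p (((j:ℝ)+1)*x - 1/2) : ℝ) : ℂ) := by
    rw [← intervalIntegral.integral_ofReal]
    apply intervalIntegral.integral_congr
    intro x _
    push_cast
    ring
  rw [hIp, hIm] at huniq
  have hreal : (∫ x in (0:ℝ)..1, Φr p ((j:ℝ)*x) * Φr p (((j:ℝ)+1)*x - 1/2))
      - (∫ x in (0:ℝ)..1, Φr p ((j:ℝ)*x) * Φr p (((j:ℝ)+1)*x))
      = ∑' s : ℤ, δd p j s := by
    exact_mod_cast huniq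
  have hpos := tsum_δd_pos hp2 hpe hj hjp
  linarith

end Final

/-! ### Norm identities and the final theorem -/

lemma rpow_of_sq {x c : ℝ} (hx : 0 ≤ x) (h : x^2 = c) : x ^ p = c ^ (p/2) := by
  subst h
  rw [← Real.rpow_natCast x 2, ← Real.rpow_mul hx]
  congr 1
  push_cast
  ring

lemma normsq_add (θ : ℝ) : ‖1 + Complex.exp ((θ:ℂ) * Complex.I)‖^2 = 2 + 2*Real.cos θ := by
  rw [Complex.exp_mul_I, ← Complex.ofReal_cos, ← Complex.ofReal_sin]
  have h : (1:ℂ) + (↑(Real.cos θ) + ↑(Real.sin θ)*Complex.I)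
      = ↑(1+Real.cos θ) + ↑(Real.sin θ)*Complex.I := by push_cast; ring
  rw [h, Complex.sq_norm, Complex.normSq_add_mul_I]
  nlinarith [Real.sin_sq_add_cos_sq θ]

lemma normsq_sub (θ : ℝ) : ‖1 - Complex.exp ((θ:ℂ) * Complex.I)‖^2 = 2 - 2*Real.cos θ := by
  rw [Complex.exp_mul_I, ← Complex.ofReal_cos, ← Complex.ofReal_sin]
  have h : (1:ℂ) - (↑(Real.cos θ) + ↑(Real.sin θ)*Complex.I)
      = ↑(1-Real.cos θ) + ↑(-Real.sin θ)*Complex.I := by push_cast; ring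
  rw [h, Complex.sq_norm, Complex.normSq_add_mul_I]
  nlinarith [Real.sin_sq_add_cos_sq θ]

lemma integrand_plus (j : ℤ) (x : ℝ) :
    ‖(1 + Complex.exp (2 * π * Complex.I * (j:ℂ) * (x:ℂ))) *
      (1 + Complex.exp (2 * π * Complex.I * ((j:ℂ)+1) * (x:ℂ)))‖ ^ p
    = Φr p ((j:ℝ)*x) * Φr p (((j:ℝ)+1)*x) := by
  have e1 : 2 * (π:ℂ) * Complex.I * (j:ℂ) * (x:ℂ)
      = ((2*π*((j:ℝ)*x) : ℝ) : ℂ) * Complex.I := by push_cast; ring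
  have e2 : 2 * (π:ℂ) * Complex.I * ((j:ℂ)+1) * (x:ℂ)
      = ((2*π*(((j:ℝ)+1)*x) : ℝ) : ℂ) * Complex.I := by push_cast; ring
  rw [e1, e2, norm_mul, Real.mul_rpow (norm_nonneg _) (norm_nonneg _)]
  congr 1
  · exact rpow_of_sq (norm_nonneg _) (normsq_add _)
  · exact rpow_of_sq (norm_nonneg _) (normsq_add _)

lemma integrand_minus (j : ℤ) (x : ℝ) :
    ‖(1 + Complex.exp (2 * π * Complex.I * (j:ℂ) * (x:ℂ))) *
      (1 - Complex.exp (2 * π * Complex.I * ((j:ℂ)+1) * (x:ℂ)))‖ ^ p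
    = Φr p ((j:ℝ)*x) * Φr p (((j:ℝ)+1)*x - 1/2) := by
  have e1 : 2 * (π:ℂ) * Complex.I * (j:ℂ) * (x:ℂ)
      = ((2*π*((j:ℝ)*x) : ℝ) : ℂ) * Complex.I := by push_cast; ring
  have e2 : 2 * (π:ℂ) * Complex.I * ((j:ℂ)+1) * (x:ℂ)
      = ((2*π*(((j:ℝ)+1)*x) : ℝ) : ℂ) * Complex.I := by push_cast; ring
  have hΨ : Φr p (((j:ℝ)+1)*x - 1/2)
      = (2 - 2*Real.cos (2*π*(((j:ℝ)+1)*x))) ^ (p/2) := by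
    unfold Φr
    congr 2
    rw [show 2*π*((((j:ℝ)+1)*x) - 1/2) = 2*π*(((j:ℝ)+1)*x) - π by ring, Real.cos_sub_pi]
    ring
  rw [e1, e2, norm_mul, Real.mul_rpow (norm_nonneg _) (norm_nonneg _), hΨ]
  congr 1
  · exact rpow_of_sq (norm_nonneg _) (normsq_add _)
  · exact rpow_of_sq (norm_nonneg _) (normsq_sub _)

end

end Majorant

/-- **Failure of the Hardy–Littlewood majorant property** (Mockenhaupt–Schlag
examples). For `p > 2` not an even integer and `j` an odd integer with `j > p/2`,
the polynomials `G₀ = (1+e_j)(1+e_{j+1})` and `g₀ = (1+e_j)(1−e_{j+1})` satisfy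
`‖G₀‖_{L^p(𝕋)} < ‖g₀‖_{L^p(𝕋)}`, although the Fourier coefficients of `g₀` are
majorized in absolute value by those of `G₀`. -/
theorem majorant_property_fails
    (p : ℝ) (hp : 2 < p) (hpe : ∀ m : ℕ, p ≠ 2 * m)
    (j : ℤ) (hj : Odd j) (hjp : p / 2 < (j : ℝ)) :
    (∫ x in (0 : ℝ)..1,
        ‖(1 + Complex.exp (2 * Real.pi * Complex.I * (j : ℂ) * (x : ℂ))) *
            (1 + Complex.exp (2 * Real.pi * Complex.I * ((j : ℂ) + 1) * (x : ℂ)))‖ ^ p) ^ (1 / p) <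
      (∫ x in (0 : ℝ)..1,
        ‖(1 + Complex.exp (2 * Real.pi * Complex.I * (j : ℂ) * (x : ℂ))) *
            (1 - Complex.exp (2 * Real.pi * Complex.I * ((j : ℂ) + 1) * (x : ℂ)))‖ ^ p) ^ (1 / p) := by
  have h1 : (∫ x in (0 : ℝ)..1,
      ‖(1 + Complex.exp (2 * Real.pi * Complex.I * (j : ℂ) * (x : ℂ))) *
          (1 + Complex.exp (2 * Real.pi * Complex.I * ((j : ℂ) + 1) * (x : ℂ)))‖ ^ p)
      = ∫ x in (0:ℝ)..1, Majorant.Φr p ((j:ℝ)*x) * Majorant.Φr p (((j:ℝ)+1)*x) :=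
    intervalIntegral.integral_congr (fun x _ => Majorant.integrand_plus j x)
  have h2 : (∫ x in (0 : ℝ)..1,
      ‖(1 + Complex.exp (2 * Real.pi * Complex.I * (j : ℂ) * (x : ℂ))) *
          (1 - Complex.exp (2 * Real.pi * Complex.I * ((j : ℂ) + 1) * (x : ℂ)))‖ ^ p)
      = ∫ x in (0:ℝ)..1, Majorant.Φr p ((j:ℝ)*x) * Majorant.Φr p (((j:ℝ)+1)*x - 1/2) :=
    intervalIntegral.integral_congr (fun x _ => Majorant.integrand_minus j x)
  rw [h1, h2]
  have hR := Majorant.R_lt hp hpe hj hjp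
  have hnn : 0 ≤ ∫ x in (0:ℝ)..1, Majorant.Φr p ((j:ℝ)*x) * Majorant.Φr p (((j:ℝ)+1)*x) := by
    apply intervalIntegral.integral_nonneg (by norm_num)
    intro x _
    exact mul_nonneg (Majorant.Φr_nonneg _) (Majorant.Φr_nonneg _)
  exact Real.rpow_lt_rpow hnn hR (by positivity)
end

section
/- Let p > 2 with p not an even integer, let j be an odd integer with j > p/2, set G_0 = (1 + e_j)(1 + e_{j+1}) and g_0 = (1 + e_j)(1 − e_{j+1}), and let q > 0 be such that ‖G_0‖_{L^p(𝕋)} < ‖g_0‖_{L^q(𝕋)}. Then for every ε > 0 there exist K ∈ ℕ and positive integers N_1, …, N_K such that the Riesz-product-type polynomials G(t) = G_0(t) · ∏_{i=1}^{K} G_0(N_i t) and g(t) = g_0(t) · ∏_{i=1}^{K} g_0(N_i t) satisfy ‖G‖_{L^p(𝕋)} ≤ ε · ‖g‖_{L^q(𝕋)}. -/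
open MeasureTheory Finset intervalIntegral

lemma per_add_nat {β : Type*} {h : ℝ → β} (hph : Function.Periodic h 1) (k : ℕ) (x : ℝ) :
    h (x + k) = h x := by
  induction k with
  | zero => simp
  | succ n ih => rw [Nat.cast_succ, ← add_assoc, hph (x + n), ih]

lemma uc_of_periodic {f : ℝ → ℝ} (hf : Continuous f) (hper : Function.Periodic f 1) :
    UniformContinuous f := by
  haveI : Fact ((0:ℝ) < 1) := ⟨one_pos⟩
  have hg : Continuous (hper.lift : AddCircle (1:ℝ) → ℝ) := by
    apply Continuous.quotient_liftOn' hf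
  have key : f = (hper.lift : AddCircle (1:ℝ) → ℝ) ∘ (fun x : ℝ => (x : AddCircle (1:ℝ))) := by
    funext x; simp [Function.Periodic.lift_coe]
  rw [key]
  apply (CompactSpace.uniformContinuous_of_continuous hg).comp
  have : LipschitzWith 1 (fun x : ℝ => (x : AddCircle (1:ℝ))) := by
    apply LipschitzWith.of_dist_le_mul
    intro x y
    simp only [dist_eq_norm, NNReal.coe_one, one_mul]
    have h1 : ((x : AddCircle (1:ℝ)) - (y : AddCircle (1:ℝ))) = ((x - y : ℝ) : AddCircle (1:ℝ)) := by
      exact (QuotientAddGroup.mk_sub _ x y).symm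
    rw [h1]
    simpa using (QuotientAddGroup.norm_mk_le_norm : ‖((x-y:ℝ) : AddCircle (1:ℝ))‖ ≤ ‖x - y‖)
  exact this.uniformContinuous

lemma key_tendsto {f h : ℝ → ℝ} (hf : Continuous f) (hpf : Function.Periodic f 1)
    (hh : Continuous h) (hph : Function.Periodic h 1) :
    Filter.Tendsto (fun N : ℕ => ∫ x in (0:ℝ)..1, f x * h (N * x)) Filter.atTop
      (nhds ((∫ x in (0:ℝ)..1, f x) * ∫ x in (0:ℝ)..1, h x)) := by
  obtain ⟨M, hM⟩ : ∃ M : ℝ, ∀ u ∈ Set.uIoc (0:ℝ) 1, |h u| ≤ M := by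
    obtain ⟨M, hM⟩ := (isCompact_Icc (a := (0:ℝ)) (b := 1)).exists_bound_of_continuousOn
      hh.continuousOn
    refine ⟨M, fun u hu => ?_⟩
    have hu' : u ∈ Set.Icc (0:ℝ) 1 := by
      rcases hu with ⟨h1, h2⟩
      exact ⟨le_of_lt (by simpa using h1), by simpa using h2⟩
    simpa [Real.norm_eq_abs] using hM u hu'
  have hM0 : 0 ≤ M := le_trans (abs_nonneg _) (hM 1 (by constructor <;> norm_num))
  rw [Metric.tendsto_atTop]
  intro ε' hε'
  set ε : ℝ := ε' / (2 * (M + 1)) with hεdef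
  have hεpos : 0 < ε := by positivity
  obtain ⟨δ, hδpos, hδ⟩ := Metric.uniformContinuous_iff.mp (uc_of_periodic hf hpf) ε hεpos
  obtain ⟨n₀, hn₀⟩ := exists_nat_gt (1/δ)
  refine ⟨n₀ + 1, fun N hN => ?_⟩
  have hN1 : 1 ≤ N := le_trans (Nat.le_add_left 1 n₀) hN
  have hNpos : (0:ℝ) < N := by exact_mod_cast hN1
  have hNne : (N:ℝ) ≠ 0 := ne_of_gt hNpos
  have hNδ : 1 / (N:ℝ) < δ := by
    rw [div_lt_iff₀ hNpos]
    calc (1:ℝ) = δ * (1/δ) := by field_simp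
    _ < δ * N := by
        apply mul_lt_mul_of_pos_left _ hδpos
        calc (1/δ : ℝ) < n₀ := hn₀
        _ ≤ N := by exact_mod_cast le_trans (Nat.le_succ n₀) hN
  set D : ℝ → ℝ := fun u => ∑ k ∈ range N, (1/(N:ℝ)) * f ((u + k)/N) with hD
  have hid : ∀ x : ℝ, (N:ℝ) * (x/N) = x := fun x => by field_simp
  have hDcont : Continuous D := by
    apply continuous_finset_sum
    intro k _
    exact continuous_const.mul (hf.comp (by continuity))
  -- key identity
  have key : (∫ x in (0:ℝ)..1, f x * h (N * x)) = ∫ u in (0:ℝ)..1, D u * h u := by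
    have ha0 : ((0:ℕ):ℝ)/(N:ℝ) = 0 := by simp
    have haN : ((N:ℕ):ℝ)/(N:ℝ) = 1 := by field_simp
    have step1 : (∫ x in (0:ℝ)..1, f x * h (N * x))
        = ∑ k ∈ range N, ∫ x in (((k:ℕ):ℝ)/N)..((((k+1):ℕ):ℝ)/N), f x * h (N * x) := by
      rw [sum_integral_adjacent_intervals (a := fun k => ((k:ℕ):ℝ)/N) (μ := volume)
        (f := fun x => f x * h (N * x)) (n := N), ha0, haN]
      intro k _
      exact ((hf.mul (hh.comp (by continuity))).intervalIntegrable _ _)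
    rw [step1]
    have step2 : ∀ k ∈ range N, (∫ x in (((k:ℕ):ℝ)/N)..((((k+1):ℕ):ℝ)/N), f x * h (N * x))
        = ∫ u in (0:ℝ)..1, (1/(N:ℝ)) * (f ((u + k)/N) * h u) := by
      intro k _
      have cast1 : (((k+1):ℕ):ℝ) = (k:ℝ)+1 := by push_cast; ring
      have e1 : (∫ x in ((k:ℝ))..((k:ℝ)+1), f (x/N) * h (N * (x/N)))
          = (N:ℝ) • ∫ x in ((k:ℝ)/N)..(((k:ℝ)+1)/N), f x * h (N * x) :=
        integral_comp_div (f := fun x => f x * h (N * x)) hNne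
      simp only [hid] at e1
      have e3 : (∫ u in (0:ℝ)..1, f ((u + k)/N) * h u)
          = ∫ x in ((k:ℝ))..((k:ℝ)+1), f (x/N) * h x := by
        have e4 := integral_comp_add_right (a := (0:ℝ)) (b := 1)
          (f := fun x => f (x/N) * h x) ((k:ℕ):ℝ)
        simp only [per_add_nat hph k] at e4
        rw [e4]
        norm_num [add_comm]
      rw [intervalIntegral.integral_const_mul, e3, cast1]
      rw [e1, smul_eq_mul]
      field_simp
    rw [Finset.sum_congr rfl step2, ← intervalIntegral.integral_finset_sum]
    · congr 1
      funext u
      rw [hD]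
      rw [Finset.sum_mul]
      congr 1; funext k; ring
    · intro k _
      exact (continuous_const.mul ((hf.comp (by continuity)).mul hh)).intervalIntegrable _ _
  -- Riemann sum is close to the integral of f
  have hIf : (∫ x in (0:ℝ)..1, f x)
      = ∑ k ∈ range N, ∫ x in (((k:ℕ):ℝ)/N)..((((k+1):ℕ):ℝ)/N), f x := by
    rw [sum_integral_adjacent_intervals (a := fun k => ((k:ℕ):ℝ)/N) (μ := volume)
      (f := f) (n := N)]
    · norm_num; rw [div_self hNne]
    · intro k _; exact hf.intervalIntegrable _ _
  have Dbound : ∀ u ∈ Set.uIoc (0:ℝ) 1, |D u - (∫ x in (0:ℝ)..1, f x)| ≤ ε := by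
    intro u hu
    have hu' : 0 < u ∧ u ≤ 1 := by
      rcases hu with ⟨h1, h2⟩; exact ⟨by simpa using h1, by simpa using h2⟩
    rw [hIf, hD]
    simp only [← Finset.sum_sub_distrib]
    calc |∑ k ∈ range N, ((1/(N:ℝ)) * f ((u + k)/N)
          - ∫ x in (((k:ℕ):ℝ)/N)..((((k+1):ℕ):ℝ)/N), f x)|
        ≤ ∑ k ∈ range N, |(1/(N:ℝ)) * f ((u + k)/N)
          - ∫ x in (((k:ℕ):ℝ)/N)..((((k+1):ℕ):ℝ)/N), f x| := Finset.abs_sum_le_sum_abs _ _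
      _ ≤ ∑ _k ∈ range N, ε * (1/(N:ℝ)) := by
          apply Finset.sum_le_sum
          intro k _
          have cast1 : (((k+1):ℕ):ℝ) = (k:ℝ)+1 := by push_cast; ring
          have hconst : (1/(N:ℝ)) * f ((u + k)/N)
              = ∫ _x in (((k:ℕ):ℝ)/N)..((((k+1):ℕ):ℝ)/N), f ((u + k)/N) := by
            rw [intervalIntegral.integral_const, cast1, smul_eq_mul]
            congr 1
            field_simp; ring
          rw [hconst, ← intervalIntegral.integral_sub
            (intervalIntegrable_const) (hf.intervalIntegrable _ _)]
          have hbound : ∀ x ∈ Set.uIoc (((k:ℕ):ℝ)/N) ((((k+1):ℕ):ℝ)/N),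
              ‖f ((u + k)/N) - f x‖ ≤ ε := by
            intro x hx
            have hkk : (((k:ℕ):ℝ)/N) < ((((k+1):ℕ):ℝ)/N) := by
              have e : (((k:ℝ)+1))/(N:ℝ) - (k:ℝ)/N = 1/N := by
                rw [div_sub_div_same]; ring_nf
              rw [cast1]
              have := one_div_pos.mpr hNpos
              linarith
            have hxm : x ∈ Set.Ioc (((k:ℕ):ℝ)/N) ((((k+1):ℕ):ℝ)/N) := by
              rwa [Set.uIoc_of_le hkk.le] at hx
            have ha1 : ((k:ℕ):ℝ)/N < (u + k)/N := by
              have e : (u + (k:ℝ))/N - (k:ℝ)/N = u/N := by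
                rw [add_comm, div_sub_div_same]; ring_nf
              have := div_pos hu'.1 hNpos
              linarith
            have ha2 : (u + k)/N ≤ ((((k+1)):ℕ):ℝ)/N := by
              have e : ((k:ℝ)+1)/N - (u + (k:ℝ))/N = (1-u)/N := by
                rw [div_sub_div_same]; ring_nf
              have := div_nonneg (by linarith [hu'.2] : (0:ℝ) ≤ 1 - u) hNpos.le
              rw [cast1]; linarith
            have hdist : dist ((u + k)/N) x < δ := by
              rw [Real.dist_eq, abs_sub_lt_iff]
              have hlen : ((((k+1)):ℕ):ℝ)/N - ((k:ℕ):ℝ)/N = 1/N := by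
                rw [cast1, div_sub_div_same, add_sub_cancel_left]
              constructor <;> linarith [hxm.1, hxm.2, hNδ]
            have := hδ hdist
            rw [Real.dist_eq] at this
            exact this.le
          have := intervalIntegral.norm_integral_le_of_norm_le_const (C := ε)
            (a := (((k:ℕ):ℝ)/N)) (b := ((((k+1):ℕ):ℝ)/N))
            (f := fun x => f ((u + k)/N) - f x) hbound
          rw [Real.norm_eq_abs] at this
          have habs : |((((k+1)):ℕ):ℝ)/N - ((k:ℕ):ℝ)/N| = 1/(N:ℝ) := by
            rw [cast1, div_sub_div_same, add_sub_cancel_left, abs_of_pos (by positivity)]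
          rw [habs] at this
          exact this
      _ = ε := by
          rw [Finset.sum_const, Finset.card_range, nsmul_eq_mul]
          field_simp
  rw [Real.dist_eq, key]
  have hIh : (∫ x in (0:ℝ)..1, f x) * ∫ x in (0:ℝ)..1, h x
      = ∫ u in (0:ℝ)..1, (∫ x in (0:ℝ)..1, f x) * h u :=
    (intervalIntegral.integral_const_mul _ _).symm
  rw [hIh, ← intervalIntegral.integral_sub (f := fun u => D u * h u) (g := fun u => (∫ x in (0:ℝ)..1, f x) * h u) ((hDcont.mul hh).intervalIntegrable _ _)
    ((continuous_const.mul hh).intervalIntegrable _ _)]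
  have hring : ∀ u : ℝ, D u * h u - (∫ x in (0:ℝ)..1, f x) * h u
      = (D u - ∫ x in (0:ℝ)..1, f x) * h u := fun u => by ring
  simp only [hring]
  have hb : ∀ u ∈ Set.uIoc (0:ℝ) 1, ‖(D u - ∫ x in (0:ℝ)..1, f x) * h u‖ ≤ ε * M := by
    intro u hu
    rw [Real.norm_eq_abs, abs_mul]
    exact mul_le_mul (Dbound u hu) (hM u hu) (abs_nonneg _) hεpos.le
  have hfin := intervalIntegral.norm_integral_le_of_norm_le_const hb
  rw [Real.norm_eq_abs] at hfin
  have h10 : |(1:ℝ) - 0| = 1 := by norm_num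
  rw [h10, mul_one] at hfin
  refine lt_of_le_of_lt hfin ?_
  have h1 : ε * (M+1) = ε'/2 := by
    rw [hεdef]; field_simp
  nlinarith [hεpos, hM0, hε']

set_option maxHeartbeats 2000000 in
/-- **Riesz product amplification.** With `G₀ = (1+e_j)(1+e_{j+1})`,
`g₀ = (1+e_j)(1−e_{j+1})` (`j` odd, `j > p/2`, `p > 2` not an even integer) and
`q > 0` such that `‖G₀‖_{L^p} < ‖g₀‖_{L^q}`, for every `ε > 0` there are `K ∈ ℕ`
and positive integers `N_1, …, N_K` such that `G(t) = G₀(t) ∏_{i} G₀(N_i t)` and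
`g(t) = g₀(t) ∏_{i} g₀(N_i t)` satisfy `‖G‖_{L^p} ≤ ε ‖g‖_{L^q}`. -/
theorem riesz_product_amplification
    (p : ℝ) (hp : 2 < p) (hpe : ∀ m : ℕ, p ≠ 2 * m)
    (j : ℤ) (hj : Odd j) (hjp : p / 2 < (j : ℝ))
    (G₀ g₀ : ℝ → ℂ)
    (hG₀ : ∀ x : ℝ, G₀ x =
      (1 + Complex.exp (2 * Real.pi * Complex.I * (j : ℂ) * (x : ℂ))) *
        (1 + Complex.exp (2 * Real.pi * Complex.I * ((j : ℂ) + 1) * (x : ℂ))))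
    (hg₀ : ∀ x : ℝ, g₀ x =
      (1 + Complex.exp (2 * Real.pi * Complex.I * (j : ℂ) * (x : ℂ))) *
        (1 - Complex.exp (2 * Real.pi * Complex.I * ((j : ℂ) + 1) * (x : ℂ))))
    (q : ℝ) (hq : 0 < q)
    (hlt : (∫ x in (0 : ℝ)..1, ‖G₀ x‖ ^ p) ^ (1 / p) <
      (∫ x in (0 : ℝ)..1, ‖g₀ x‖ ^ q) ^ (1 / q))
    (ε : ℝ) (hε : 0 < ε) :
    ∃ (K : ℕ) (N : Fin K → ℕ), (∀ i, 0 < N i) ∧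
      (∫ x in (0 : ℝ)..1, ‖G₀ x * ∏ i : Fin K, G₀ ((N i : ℝ) * x)‖ ^ p) ^ (1 / p) ≤
        ε * (∫ x in (0 : ℝ)..1, ‖g₀ x * ∏ i : Fin K, g₀ ((N i : ℝ) * x)‖ ^ q) ^ (1 / q) := by
  have hp0 : (0:ℝ) < p := by linarith
  -- continuity and periodicity of G₀ and g₀
  have hexp : ∀ (m : ℤ) (x : ℝ),
      Complex.exp (2 * Real.pi * Complex.I * (m:ℂ) * ((x + 1 : ℝ):ℂ)) =
      Complex.exp (2 * Real.pi * Complex.I * (m:ℂ) * (x:ℂ)) := by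
    intro m x
    push_cast
    rw [mul_add, Complex.exp_add, mul_one]
    have h1 : Complex.exp (2 * (Real.pi:ℂ) * Complex.I * (m:ℂ)) = 1 := by
      rw [show (2 * (Real.pi:ℂ) * Complex.I * (m:ℂ)) = (m:ℂ) * (2 * Real.pi * Complex.I) by ring]
      exact Complex.exp_int_mul_two_pi_mul_I m
    rw [h1, mul_one]
  have hG₀c : Continuous G₀ := by
    have : G₀ = fun x : ℝ => (1 + Complex.exp (2 * Real.pi * Complex.I * (j : ℂ) * (x : ℂ))) *
        (1 + Complex.exp (2 * Real.pi * Complex.I * ((j : ℂ) + 1) * (x : ℂ))) := funext hG₀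
    rw [this]; continuity
  have hg₀c : Continuous g₀ := by
    have : g₀ = fun x : ℝ => (1 + Complex.exp (2 * Real.pi * Complex.I * (j : ℂ) * (x : ℂ))) *
        (1 - Complex.exp (2 * Real.pi * Complex.I * ((j : ℂ) + 1) * (x : ℂ))) := funext hg₀
    rw [this]; continuity
  have hcast : ∀ x : ℝ, ((j:ℂ) + 1) * (x:ℂ) = ((j+1 : ℤ):ℂ) * (x:ℂ) := by
    intro x; push_cast; ring
  have hj1 : ((j:ℂ)+1) = ((j+1:ℤ):ℂ) := by push_cast; ring
  have hG₀per : Function.Periodic G₀ 1 := by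
    intro x
    rw [hG₀, hG₀, hj1, hexp j x, hexp (j+1) x]
  have hg₀per : Function.Periodic g₀ 1 := by
    intro x
    rw [hg₀, hg₀, hj1, hexp j x, hexp (j+1) x]
  -- the two real integrands
  set F : ℝ → ℝ := fun x => ‖G₀ x‖ ^ p with hF
  set g : ℝ → ℝ := fun x => ‖g₀ x‖ ^ q with hg
  have hFc : Continuous F := hG₀c.norm.rpow_const (fun x => Or.inr hp0.le)
  have hgc : Continuous g := hg₀c.norm.rpow_const (fun x => Or.inr hq.le)
  have hFper : Function.Periodic F 1 := fun x => by simp only [hF, hG₀per x]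
  have hgper : Function.Periodic g 1 := fun x => by simp only [hg, hg₀per x]
  set a : ℝ := ∫ x in (0:ℝ)..1, F x with ha
  set b : ℝ := ∫ x in (0:ℝ)..1, g x with hb
  have ha0 : 0 ≤ a := intervalIntegral.integral_nonneg (by norm_num)
    (fun u _ => Real.rpow_nonneg (norm_nonneg _) _)
  have hb0 : 0 ≤ b := intervalIntegral.integral_nonneg (by norm_num)
    (fun u _ => Real.rpow_nonneg (norm_nonneg _) _)
  have hbpos : 0 < b := by
    rcases lt_or_eq_of_le hb0 with hh | hh
    · exact hh
    · exfalso
      rw [← hh, Real.zero_rpow (by positivity : (0:ℝ) < 1/q).ne'] at hlt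
      exact absurd hlt (not_lt.mpr (Real.rpow_nonneg ha0 _))
  rcases eq_or_lt_of_le ha0 with haz | hapos
  · -- degenerate case a = 0
    refine ⟨0, fun i => i.elim0, fun i => i.elim0, ?_⟩
    simp only [Finset.univ_eq_empty, Finset.prod_empty, mul_one]
    rw [← ha, ← hb, ← haz, Real.zero_rpow (by positivity : (0:ℝ) < 1/p).ne']
    positivity
  -- choose δ
  obtain ⟨δ, hδ0, hδ1, hδlt⟩ : ∃ δ : ℝ, 0 < δ ∧ δ < 1 ∧
      ((1+δ)*a) ^ (1/p) < ((1-δ)*b) ^ (1/q) := by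
    have hc1 : ContinuousAt (fun δ : ℝ => ((1+δ)*a) ^ (1/p)) 0 := by
      apply ContinuousAt.rpow_const
      · exact (continuousAt_const.add continuousAt_id).mul continuousAt_const
      · exact Or.inr (by positivity)
    have hc2 : ContinuousAt (fun δ : ℝ => ((1-δ)*b) ^ (1/q)) 0 := by
      apply ContinuousAt.rpow_const
      · exact (continuousAt_const.sub continuousAt_id).mul continuousAt_const
      · exact Or.inr (by positivity)
    have h0 : ((1+(0:ℝ))*a) ^ (1/p) < ((1-(0:ℝ))*b) ^ (1/q) := by
      rw [add_zero, sub_zero, one_mul, one_mul]; exact hlt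
    have hev : ∀ᶠ δ in nhds (0:ℝ), ((1+δ)*a) ^ (1/p) < ((1-δ)*b) ^ (1/q) :=
      hc1.eventually_lt hc2 h0
    have hev2 : ∀ᶠ δ in nhds (0:ℝ), |δ| < 1 := by
      have : Set.Ioo (-1:ℝ) 1 ∈ nhds (0:ℝ) := Ioo_mem_nhds (by norm_num) (by norm_num)
      filter_upwards [this] with δ hδ
      rw [abs_lt]; exact ⟨hδ.1, hδ.2⟩
    have := (hev.and hev2).filter_mono (nhdsWithin_le_nhds (s := Set.Ioi (0:ℝ)))
    obtain ⟨δ, ⟨h1, h2⟩, h3⟩ := (this.and self_mem_nhdsWithin).exists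
    exact ⟨δ, h3, (abs_lt.mp h2).2, h1⟩
  set a' : ℝ := (1+δ)*a with ha'
  set b' : ℝ := (1-δ)*b with hb'
  have ha'pos : 0 < a' := by positivity
  have hb'pos : 0 < b' := mul_pos (by linarith) hbpos
  have haa' : a < a' := by nlinarith
  have hbb' : b' < b := by nlinarith
  -- main induction
  have main : ∀ K : ℕ, ∃ N : Fin K → ℕ, (∀ i, 0 < N i) ∧
      0 < (∫ x in (0:ℝ)..1, ‖G₀ x * ∏ i : Fin K, G₀ ((N i : ℝ) * x)‖ ^ p) ∧
      (∫ x in (0:ℝ)..1, ‖G₀ x * ∏ i : Fin K, G₀ ((N i : ℝ) * x)‖ ^ p) ≤ a * a' ^ K ∧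
      b * b' ^ K ≤ (∫ x in (0:ℝ)..1, ‖g₀ x * ∏ i : Fin K, g₀ ((N i : ℝ) * x)‖ ^ q) := by
    intro K
    induction K with
    | zero =>
      refine ⟨fun i => i.elim0, fun i => i.elim0, ?_, ?_, ?_⟩ <;>
        simp only [Finset.univ_eq_empty, Finset.prod_empty, mul_one, pow_zero]
      · exact hapos
      · exact le_rfl
      · exact le_rfl
    | succ K ih =>
      obtain ⟨N, hNpos, hP0, hPle, hQge⟩ := ih
      set Φ : ℝ → ℝ := fun x => ‖G₀ x * ∏ i : Fin K, G₀ ((N i : ℝ) * x)‖ ^ p with hΦ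
      set Ψ : ℝ → ℝ := fun x => ‖g₀ x * ∏ i : Fin K, g₀ ((N i : ℝ) * x)‖ ^ q with hΨ
      have hGprodc : Continuous (fun x : ℝ => G₀ x * ∏ i : Fin K, G₀ ((N i : ℝ) * x)) := by
        apply hG₀c.mul
        apply continuous_finset_prod
        intro i _
        exact hG₀c.comp (continuous_const.mul continuous_id)
      have hgprodc : Continuous (fun x : ℝ => g₀ x * ∏ i : Fin K, g₀ ((N i : ℝ) * x)) := by
        apply hg₀c.mul
        apply continuous_finset_prod
        intro i _
        exact hg₀c.comp (continuous_const.mul continuous_id)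
      have hΦc : Continuous Φ := hGprodc.norm.rpow_const (fun x => Or.inr hp0.le)
      have hΨc : Continuous Ψ := hgprodc.norm.rpow_const (fun x => Or.inr hq.le)
      have hGprodper : Function.Periodic
          (fun x : ℝ => G₀ x * ∏ i : Fin K, G₀ ((N i : ℝ) * x)) 1 := by
        intro x
        simp only [hG₀per x, mul_add, mul_one]
        congr 1
        apply Finset.prod_congr rfl
        intro i _
        exact per_add_nat hG₀per (N i) ((N i : ℝ) * x)
      have hgprodper : Function.Periodic
          (fun x : ℝ => g₀ x * ∏ i : Fin K, g₀ ((N i : ℝ) * x)) 1 := by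
        intro x
        simp only [hg₀per x, mul_add, mul_one]
        congr 1
        apply Finset.prod_congr rfl
        intro i _
        exact per_add_nat hg₀per (N i) ((N i : ℝ) * x)
      have hΦper : Function.Periodic Φ 1 := fun x => by simp only [hΦ, hGprodper x]
      have hΨper : Function.Periodic Ψ 1 := fun x => by simp only [hΨ, hgprodper x]
      have t1 := key_tendsto hΦc hΦper hFc hFper
      have t2 := key_tendsto hΨc hΨper hgc hgper
      rw [← ha] at t1
      rw [← hb] at t2
      set P : ℝ := ∫ x in (0:ℝ)..1, Φ x with hP
      set Q : ℝ := ∫ x in (0:ℝ)..1, Ψ x with hQ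
      have hQ0 : 0 < Q := lt_of_lt_of_le (by positivity) hQge
      have e1 : ∀ᶠ M : ℕ in Filter.atTop,
          (∫ x in (0:ℝ)..1, Φ x * F ((M:ℝ) * x)) < P * a' :=
        t1.eventually_lt_const (by nlinarith)
      have e2 : ∀ᶠ M : ℕ in Filter.atTop,
          0 < (∫ x in (0:ℝ)..1, Φ x * F ((M:ℝ) * x)) :=
        t1.eventually_const_lt (by nlinarith)
      have e3 : ∀ᶠ M : ℕ in Filter.atTop,
          Q * b' < (∫ x in (0:ℝ)..1, Ψ x * g ((M:ℝ) * x)) :=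
        t2.eventually_const_lt (by nlinarith)
      obtain ⟨M, hM1, hMe1, hMe2, hMe3⟩ :
          ∃ M : ℕ, 1 ≤ M ∧ (∫ x in (0:ℝ)..1, Φ x * F ((M:ℝ) * x)) < P * a' ∧
            0 < (∫ x in (0:ℝ)..1, Φ x * F ((M:ℝ) * x)) ∧
            Q * b' < (∫ x in (0:ℝ)..1, Ψ x * g ((M:ℝ) * x)) := by
        obtain ⟨M, h⟩ := (((Filter.eventually_ge_atTop 1).and e1).and (e2.and e3)).exists
        exact ⟨M, h.1.1, h.1.2, h.2.1, h.2.2⟩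
      have splitG : (fun x : ℝ => ‖G₀ x * ∏ i : Fin (K+1),
          G₀ ((((Fin.snoc N M : Fin (K+1) → ℕ) i : ℕ) : ℝ) * x)‖ ^ p)
          = fun x : ℝ => Φ x * F ((M:ℝ) * x) := by
        funext x
        rw [Fin.prod_univ_castSucc]
        simp only [Fin.snoc_castSucc, Fin.snoc_last]
        rw [← mul_assoc, norm_mul, Real.mul_rpow (norm_nonneg _) (norm_nonneg _)]
      have splitg : (fun x : ℝ => ‖g₀ x * ∏ i : Fin (K+1),
          g₀ ((((Fin.snoc N M : Fin (K+1) → ℕ) i : ℕ) : ℝ) * x)‖ ^ q)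
          = fun x : ℝ => Ψ x * g ((M:ℝ) * x) := by
        funext x
        rw [Fin.prod_univ_castSucc]
        simp only [Fin.snoc_castSucc, Fin.snoc_last]
        rw [← mul_assoc, norm_mul, Real.mul_rpow (norm_nonneg _) (norm_nonneg _)]
      refine ⟨Fin.snoc N M, ?_, ?_, ?_, ?_⟩
      · intro i
        refine Fin.lastCases ?_ ?_ i
        · simp only [Fin.snoc_last]; exact hM1
        · intro i; simpa using hNpos i
      · rw [splitG]; exact hMe2
      · rw [splitG]
        calc (∫ x in (0:ℝ)..1, Φ x * F ((M:ℝ) * x)) ≤ P * a' := hMe1.le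
          _ ≤ (a * a' ^ K) * a' := mul_le_mul_of_nonneg_right hPle ha'pos.le
          _ = a * a' ^ (K+1) := by rw [pow_succ]; ring
      · rw [splitg]
        calc b * b' ^ (K+1) = (b * b' ^ K) * b' := by rw [pow_succ]; ring
          _ ≤ Q * b' := mul_le_mul_of_nonneg_right hQge hb'pos.le
          _ ≤ (∫ x in (0:ℝ)..1, Ψ x * g ((M:ℝ) * x)) := hMe3.le
  -- final choice of K
  set A : ℝ := a ^ (1/p) with hA
  set B : ℝ := b ^ (1/q) with hBdef
  set u : ℝ := a' ^ (1/p) with hu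
  set v : ℝ := b' ^ (1/q) with hv
  have hApos : 0 < A := Real.rpow_pos_of_pos hapos _
  have hBpos : 0 < B := Real.rpow_pos_of_pos hbpos _
  have hupos : 0 < u := Real.rpow_pos_of_pos ha'pos _
  have hvpos : 0 < v := Real.rpow_pos_of_pos hb'pos _
  have huv : u < v := hδlt
  have hratio : Filter.Tendsto (fun K : ℕ => A * (u/v) ^ K) Filter.atTop (nhds 0) := by
    rw [show (0:ℝ) = A * 0 by ring]
    exact (tendsto_pow_atTop_nhds_zero_of_lt_one (by positivity)
      ((div_lt_one hvpos).mpr huv)).const_mul A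
  obtain ⟨K, hK⟩ := (hratio.eventually_lt_const (by positivity : (0:ℝ) < ε * B)).exists
  obtain ⟨N, hNpos, hP0, hPle, hQge⟩ := main K
  refine ⟨K, N, hNpos, ?_⟩
  have hpowp : ∀ (c : ℝ), 0 ≤ c → ∀ e : ℝ, (c ^ K) ^ e = (c ^ e) ^ K := by
    intro c hc e
    rw [← Real.rpow_natCast c K, ← Real.rpow_mul hc, mul_comm, Real.rpow_mul hc,
      Real.rpow_natCast]
  calc (∫ x in (0:ℝ)..1, ‖G₀ x * ∏ i : Fin K, G₀ ((N i : ℝ) * x)‖ ^ p) ^ (1/p)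
      ≤ (a * a' ^ K) ^ (1/p) := Real.rpow_le_rpow hP0.le hPle (by positivity)
    _ = A * u ^ K := by
        rw [Real.mul_rpow hapos.le (by positivity), hpowp a' ha'pos.le (1/p)]
    _ = A * (u/v) ^ K * v ^ K := by
        rw [div_pow, mul_assoc, div_mul_cancel₀ _ (by positivity : (v:ℝ) ^ K ≠ 0)]
    _ ≤ (ε * B) * v ^ K := mul_le_mul_of_nonneg_right hK.le (by positivity)
    _ = ε * (B * v ^ K) := by ring
    _ = ε * ((b * b' ^ K) ^ (1/q)) := by
        rw [Real.mul_rpow hbpos.le (by positivity), hpowp b' hb'pos.le (1/q)]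
    _ ≤ ε * ((∫ x in (0:ℝ)..1, ‖g₀ x * ∏ i : Fin K, g₀ ((N i : ℝ) * x)‖ ^ q) ^ (1/q)) := by
        apply mul_le_mul_of_nonneg_left _ hε.le
        exact Real.rpow_le_rpow (by positivity) hQge (by positivity)
end
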